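/- In q-pebbling on a finite connected graph G with target vertex v, if a configuration D satisfies sum_w D(w)/q^{dist(w,v)} > sum_{w ≠ v} (q-1)/q^{dist(w,v)}, then D is v-solvable. -/

import Mathlib

/-- A `q`-pebbling move: remove `q` pebbles from a vertex `u` (which has at least `q`
pebbles) and add one pebble to a neighbour `u'`. -/
def PebStep {V : Type*} [DecidableEq V] (q : ℕ) (G : SimpleGraph V) (D D' : V → ℕ) : Prop :=
  ∃ u u', G.Adj u u' ∧ q ≤ D u ∧
    D' = fun w => if w = u then D u - q else if w = u' then D u' + 1 else D w

/-- A configuration `D` is `v`-solvable if a finite sequence of `q`-pebbling moves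
places a pebble on `v`. -/
def Solvable {V : Type*} [DecidableEq V] (q : ℕ) (G : SimpleGraph V) (D : V → ℕ) (v : V) : Prop :=
  ∃ D', Relation.ReflTransGen (PebStep q G) D D' ∧ 1 ≤ D' v

/-- A vertex at positive distance from `v` has a neighbour strictly closer to `v`. -/
lemma exists_adj_dist_succ {V : Type*} (G : SimpleGraph V) (hG : G.Connected) {u v : V}
    (hne : u ≠ v) : ∃ u', G.Adj u u' ∧ G.dist u v = G.dist u' v + 1 := by
  have hd : 0 < G.dist u v := hG.pos_dist_of_ne hne
  obtain ⟨p, hp⟩ := SimpleGraph.exists_walk_of_dist_ne_zero (by omega : G.dist u v ≠ 0)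
  cases p with
  | nil => simp [← hp] at hd
  | cons h p' =>
    rename_i x
    refine ⟨x, h, le_antisymm ?_ ?_⟩
    · have h1 : G.dist u v ≤ G.dist u x + G.dist x v := hG.dist_triangle
      have h2 := SimpleGraph.dist_le h.toWalk
      simp only [SimpleGraph.Walk.length_cons, SimpleGraph.Walk.length_nil] at h2
      omega
    · have := SimpleGraph.dist_le p'
      simp only [SimpleGraph.Walk.length_cons] at hp
      omega

lemma stmt3_aux {V : Type*} [Fintype V] [DecidableEq V] (G : SimpleGraph V) (hG : G.Connected)
    (q : ℕ) (hq : 2 ≤ q) (v : V) :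
    ∀ N : ℕ, ∀ D : V → ℕ, ∑ w, D w ≤ N →
    (∑ w ∈ Finset.univ.filter (fun w => w ≠ v), ((q : ℝ) - 1) / (q : ℝ) ^ (G.dist w v)
          < ∑ w, (D w : ℝ) / (q : ℝ) ^ (G.dist w v)) →
    Solvable q G D v := by
  have hq0 : (0:ℝ) < (q:ℝ) := by positivity
  intro N
  induction N with
  | zero =>
    intro D hN h
    exfalso
    have hD : ∀ w ∈ Finset.univ, D w = 0 :=
      (Finset.sum_eq_zero_iff).mp (by omega)
    have : ∑ w, (D w : ℝ) / (q : ℝ) ^ (G.dist w v) = 0 := by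
      apply Finset.sum_eq_zero; intro w _; simp [hD w (Finset.mem_univ w)]
    rw [this] at h
    have : (0:ℝ) ≤ ∑ w ∈ Finset.univ.filter (fun w => w ≠ v),
        ((q : ℝ) - 1) / (q : ℝ) ^ (G.dist w v) := by
      apply Finset.sum_nonneg; intro w _
      have h1 : (1:ℝ) ≤ (q:ℝ) := by exact_mod_cast Nat.one_le_of_lt hq
      apply div_nonneg (by linarith) (by positivity)
    linarith
  | succ n ih =>
    intro D hN h
    by_cases hv : 1 ≤ D v
    · exact ⟨D, Relation.ReflTransGen.refl, hv⟩
    have hv0 : D v = 0 := by omega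
    -- find a vertex with at least q pebbles
    have hex : ∃ u, q ≤ D u := by
      by_contra hcon
      push_neg at hcon
      have hle : ∑ w, (D w : ℝ) / (q : ℝ) ^ (G.dist w v)
          ≤ ∑ w ∈ Finset.univ.filter (fun w => w ≠ v),
            ((q : ℝ) - 1) / (q : ℝ) ^ (G.dist w v) := by
        rw [← Finset.sum_filter_add_sum_filter_not Finset.univ (fun w => w ≠ v)
          (fun w => (D w : ℝ) / (q : ℝ) ^ (G.dist w v))]
        have h2 : ∑ w ∈ Finset.univ.filter (fun w => ¬ w ≠ v),
            (D w : ℝ) / (q : ℝ) ^ (G.dist w v) = 0 := by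
          apply Finset.sum_eq_zero
          intro w hw
          simp only [Finset.mem_filter, not_ne_iff] at hw
          simp [hw.2, hv0]
        rw [h2, add_zero]
        apply Finset.sum_le_sum
        intro w _
        have : (D w : ℝ) ≤ (q:ℝ) - 1 := by
          have := hcon w
          have : (D w : ℝ) ≤ (q:ℝ) - 1 := by
            have h1 : D w ≤ q - 1 := by omega
            have := (Nat.cast_le (α := ℝ)).2 h1
            push_cast [Nat.cast_sub (by omega : 1 ≤ q)] at this
            linarith
          exact this
        gcongr
      linarith
    obtain ⟨u, hu⟩ := hex
    have hune : u ≠ v := by intro e; rw [e] at hu; omega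
    obtain ⟨u', hadj, hdist⟩ := exists_adj_dist_succ G hG hune
    have huu' : u ≠ u' := hadj.ne
    set D' : V → ℕ := fun w => if w = u then D u - q else if w = u' then D u' + 1 else D w
      with hD'
    have hstep : PebStep q G D D' := ⟨u, u', hadj, hu, rfl⟩
    -- sum of pebbles decreases
    have hsum : ∑ w, D' w ≤ n := by
      have : ∑ w, D' w + (q - 1) = ∑ w, D w := by
        rw [hD']
        rw [← Finset.sum_add_sum_compl {u, u'}, ← Finset.sum_add_sum_compl {u, u'} D]
        have h1 : ∑ w ∈ ({u, u'} : Finset V)ᶜ,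
            (if w = u then D u - q else if w = u' then D u' + 1 else D w) =
            ∑ w ∈ ({u, u'} : Finset V)ᶜ, D w := by
          apply Finset.sum_congr rfl
          intro w hw
          simp only [Finset.mem_compl, Finset.mem_insert, Finset.mem_singleton, not_or] at hw
          simp [hw.1, hw.2]
        rw [h1]
        have h2 : ∑ w ∈ ({u, u'} : Finset V),
            (if w = u then D u - q else if w = u' then D u' + 1 else D w) =
            (D u - q) + (D u' + 1) := by
          rw [Finset.sum_pair huu']
          simp [huu', Ne.symm huu']
        rw [h2, Finset.sum_pair huu']
        omega
      omega
    -- weight is preserved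
    have hweight : ∑ w, (D' w : ℝ) / (q : ℝ) ^ (G.dist w v)
        = ∑ w, (D w : ℝ) / (q : ℝ) ^ (G.dist w v) := by
      have key : ∀ w, (D' w : ℝ) / (q : ℝ) ^ (G.dist w v)
          = (D w : ℝ) / (q : ℝ) ^ (G.dist w v)
            + (if w = u then -(q:ℝ) / (q : ℝ) ^ (G.dist u v) else 0)
            + (if w = u' then (1:ℝ) / (q : ℝ) ^ (G.dist u' v) else 0) := by
        intro x
        rw [hD']
        by_cases h1 : x = u
        · subst h1
          simp only [if_pos rfl, if_neg huu', ite_true, ite_false, Nat.cast_sub hu]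
          ring
        · by_cases h2 : x = u'
          · subst h2
            simp only [if_neg h1, if_pos rfl, ite_true, ite_false]
            push_cast
            ring
          · simp [h1, h2]
      rw [Finset.sum_congr rfl (fun w _ => key w)]
      rw [Finset.sum_add_distrib, Finset.sum_add_distrib,
        Finset.sum_ite_eq' Finset.univ u, Finset.sum_ite_eq' Finset.univ u']
      simp only [Finset.mem_univ, if_pos]
      have : -(q:ℝ) / (q : ℝ) ^ (G.dist u v) + (1:ℝ) / (q : ℝ) ^ (G.dist u' v) = 0 := by
        rw [hdist, pow_succ]
        field_simp
        ring
      linarith [this]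
    obtain ⟨E, hE, h1⟩ := ih D' hsum (by rw [hweight]; exact h)
    exact ⟨E, Relation.ReflTransGen.head hstep hE, h1⟩

/-- if `∑_w D(w)/q^{dist(w,v)} > ∑_{w ≠ v} (q-1)/q^{dist(w,v)}` then `D`
is `v`-solvable. -/
theorem stmt3 {V : Type*} [Fintype V] [DecidableEq V] (G : SimpleGraph V) (hG : G.Connected)
    (q : ℕ) (hq : 2 ≤ q) (D : V → ℕ) (v : V)
    (h : ∑ w ∈ Finset.univ.filter (fun w => w ≠ v), ((q : ℝ) - 1) / (q : ℝ) ^ (G.dist w v)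
          < ∑ w, (D w : ℝ) / (q : ℝ) ^ (G.dist w v)) :
    Solvable q G D v := by
  exact stmt3_aux G hG q hq v (∑ w, D w) D le_rfl h
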